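/- For the SEAIR model, the spectral radius of the next-generation matrix K = FV^{-1}, with F and V as specified, equals R₀ = ((1-p)β_A/γ_A + pβ_I/γ_I)·S(0). -/

import Mathlib

/-- For the SEAIR model, the spectral radius of the next-generation matrix
`K = F V⁻¹` equals `R₀ = ((1-p) β_A/γ_A + p β_I/γ_I) S(0)`: `R₀` is the
greatest modulus of the (complex) eigenvalues of `K`. -/
theorem seair_R0_spectral_radius (βA βI γA γI σ p S0 : ℝ)
    (hβA : 0 < βA) (hβI : 0 < βI) (hγA : 0 < γA) (hγI : 0 < γI)
    (hσ : 0 < σ) (hp : p ∈ Set.Icc (0 : ℝ) 1) (hS0 : 0 < S0)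
    (F V : Matrix (Fin 3) (Fin 3) ℝ)
    (hF : F = !![0, βA * S0, βI * S0; 0, 0, 0; 0, 0, 0])
    (hV : V = !![σ, 0, 0; -(1 - p) * σ, γA, 0; -p * σ, 0, γI]) :
    IsGreatest {x : ℝ | ∃ z ∈ spectrum ℂ ((F * V⁻¹).map (algebraMap ℝ ℂ)),
        x = ‖z‖}
      (((1 - p) * βA / γA + p * βI / γI) * S0) := by
  obtain ⟨hp0, hp1⟩ := hp
  set r : ℝ := ((1 - p) * βA / γA + p * βI / γI) * S0 with hr
  have hrpos : 0 < r := by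
    rw [hr]
    apply mul_pos _ hS0
    rcases lt_or_eq_of_le hp1 with h | h
    · have h1 : 0 < (1 - p) * βA / γA := div_pos (mul_pos (by linarith) hβA) hγA
      have h2 : 0 ≤ p * βI / γI := div_nonneg (mul_nonneg hp0 hβI.le) hγI.le
      linarith
    · have h1 : 0 ≤ (1 - p) * βA / γA :=
        div_nonneg (mul_nonneg (by linarith) hβA.le) hγA.le
      have h2 : 0 < p * βI / γI := div_pos (mul_pos (by linarith) hβI) hγI
      linarith
  have hVinv : V⁻¹ = !![σ⁻¹, 0, 0; (1 - p) / γA, γA⁻¹, 0; p / γI, 0, γI⁻¹] := by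
    apply Matrix.inv_eq_right_inv
    rw [hV, Matrix.mul_fin_three, Matrix.one_fin_three]
    ext i j
    fin_cases i <;> fin_cases j <;> simp <;> field_simp <;> ring
  have hK : F * V⁻¹ = !![r, βA * S0 / γA, βI * S0 / γI; 0, 0, 0; 0, 0, 0] := by
    rw [hVinv, hF, Matrix.mul_fin_three, hr]
    ext i j
    fin_cases i <;> fin_cases j <;> simp <;> field_simp <;> ring
  have hmem : ∀ z : ℂ, z ∈ spectrum ℂ ((F * V⁻¹).map (algebraMap ℝ ℂ)) ↔
      z = 0 ∨ z = (r : ℂ) := by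
    intro z
    rw [hK, spectrum.mem_iff, Matrix.isUnit_iff_isUnit_det, isUnit_iff_ne_zero,
      not_ne_iff]
    have hdet : ((algebraMap ℂ (Matrix (Fin 3) (Fin 3) ℂ)) z -
        (!![r, βA * S0 / γA, βI * S0 / γI; 0, 0, 0; 0, 0, 0] :
          Matrix (Fin 3) (Fin 3) ℝ).map (algebraMap ℝ ℂ)).det
        = (z - (r : ℂ)) * z * z := by
      simp [Matrix.det_fin_three, Matrix.map_apply, Matrix.algebraMap_matrix_apply,
        Matrix.cons_val_zero, Matrix.cons_val_one, Matrix.head_cons, Matrix.vecHead, Matrix.vecTail]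
    rw [hdet]
    constructor
    · intro h
      rcases mul_eq_zero.mp h with h | h
      · rcases mul_eq_zero.mp h with h | h
        · exact Or.inr (sub_eq_zero.mp h)
        · exact Or.inl h
      · exact Or.inl h
    · rintro (rfl | rfl) <;> ring
  constructor
  · exact ⟨(r : ℂ), (hmem r).mpr (Or.inr rfl), by
      rw [Complex.norm_real, Real.norm_eq_abs, abs_of_pos hrpos]⟩
  · rintro x ⟨z, hz, rfl⟩
    rcases (hmem z).mp hz with rfl | rfl
    · simpa using hrpos.le
    · rw [Complex.norm_real, Real.norm_eq_abs, abs_of_pos hrpos]
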